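/- Let D be a commutative ring, V₀ a D-module, r a positive integer, and V = V₀ ⊗_D D[ℤ^r] the base change of V₀ to the group algebra D[ℤ^r] of the free abelian group ℤ^r (equivalently, the Laurent polynomial module V₀ ⊗_D D[X₁^{±1},…,X_r^{±1}]). Fix e ∈ ℤ^r with e ≠ 0, let Y ∈ D[ℤ^r] be the monomial supported at e with coefficient 1, let n ≥ 1 and a₀,…,a_{n−1} ∈ D, and set β = Yⁿ + a_{n−1}·Y^{n−1} + ⋯ + a₁·Y + a₀·1 ∈ D[ℤ^r]. Then multiplication by β on V is injective: if v ∈ V satisfies β·v = 0, then v = 0. -/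

import Mathlib

open TensorProduct

/-- The lemma inside the proof of Theorem 3.1: over a commutative ring `D`, if
`V = V₀ ⊗_D D[ℤ^r]` and `β = Yⁿ + a_{n-1} Y^{n-1} + ⋯ + a₀` where `Y` is the monomial
supported at `e ≠ 0` with coefficient `1` and `n ≥ 1`, then multiplication by `β` on `V`
is injective. -/
theorem mult_by_beta_injective
    (D : Type*) [CommRing D] (V₀ : Type*) [AddCommGroup V₀] [Module D V₀]
    (r : ℕ) (hr : 0 < r) (e : Fin r → ℤ) (he : e ≠ 0)
    (n : ℕ) (hn : 1 ≤ n) (a : ℕ → D)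
    (β : AddMonoidAlgebra D (Fin r → ℤ))
    (hβ : β = AddMonoidAlgebra.single (n • e) (1 : D)
        + ∑ k ∈ Finset.range n, AddMonoidAlgebra.single (k • e) (a k))
    (v : (AddMonoidAlgebra D (Fin r → ℤ)) ⊗[D] V₀)
    (hv : β • v = 0) :
    v = 0 := by
  classical
  by_contra hne
  set Φ := (LinearEquiv.rTensor V₀ (AddMonoidAlgebra.coeffLinearEquiv D)).trans
    (TensorProduct.finsuppScalarLeft D V₀ (Fin r → ℤ)) with hΦ
  have key : ∀ (h : Fin r → ℤ) (c : D) (u : (AddMonoidAlgebra D (Fin r → ℤ)) ⊗[D] V₀)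
      (g : Fin r → ℤ),
      Φ ((AddMonoidAlgebra.single h c : AddMonoidAlgebra D (Fin r → ℤ)) • u) g
        = c • Φ u (-h + g) := by
    intro h c u g
    induction u using TensorProduct.induction_on with
    | zero => simp
    | tmul x m =>
      rw [TensorProduct.smul_tmul']
      have hx : (AddMonoidAlgebra.single h c : AddMonoidAlgebra D (Fin r → ℤ)) • x
          = AddMonoidAlgebra.single h c * x := rfl
      rw [hx, hΦ]
      rw [LinearEquiv.trans_apply, LinearEquiv.trans_apply, LinearEquiv.rTensor_tmul,
        LinearEquiv.rTensor_tmul, AddMonoidAlgebra.coeffLinearEquiv_apply,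
        AddMonoidAlgebra.coeffLinearEquiv_apply,
        TensorProduct.finsuppScalarLeft_apply_tmul_apply,
        TensorProduct.finsuppScalarLeft_apply_tmul_apply,
        AddMonoidAlgebra.coeff_single_mul_apply, mul_smul]
    | add u₁ u₂ h1 h2 =>
      simp only [smul_add, map_add, Finsupp.add_apply, h1, h2]
  -- the expansion
  have expand : ∀ g : Fin r → ℤ,
      Φ v (-(n • e) + g) + ∑ k ∈ Finset.range n, a k • Φ v (-(k • e) + g) = 0 := by
    intro g
    have h0 : Φ (β • v) g = 0 := by rw [hv]; simp
    rw [hβ, add_smul, Finset.sum_smul, map_add, map_sum, Finsupp.add_apply,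
      Finsupp.finset_sum_apply] at h0
    rw [key (n • e) 1 v g] at h0
    simp only [key] at h0
    simpa using h0
  -- choose the linear functional
  obtain ⟨i, hi⟩ := Function.ne_iff.mp he
  set s : ℤ := if 0 < e i then 1 else -1 with hs
  set f : (Fin r → ℤ) → ℤ := fun g => s * g i with hf
  have hfe : 0 < f e := by
    rcases lt_trichotomy (e i) 0 with h | h | h
    · simp only [hf, hs, if_neg (not_lt.mpr h.le)]; linarith
    · exact absurd h hi
    · simp only [hf, hs, if_pos h]; linarith
  have hf_add : ∀ x y : Fin r → ℤ, f (x + y) = f x + f y := by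
    intro x y; simp [hf, Pi.add_apply, mul_add]
  have hf_smul : ∀ (k : ℕ), f (k • e) = (k : ℤ) * f e := by
    intro k; simp [hf, Pi.smul_apply]; ring
  have hf_neg : ∀ x : Fin r → ℤ, f (-x) = - f x := by
    intro x; simp [hf]
  -- support of w
  set w : (Fin r → ℤ) →₀ V₀ := Φ v with hw
  have hwne : w ≠ 0 := by
    intro h
    exact hne (Φ.map_eq_zero_iff.mp h)
  obtain ⟨g₀, hg₀, hmax⟩ := Finset.exists_max_image w.support f
    (Finsupp.support_nonempty_iff.mpr hwne)
  have hmain := expand (n • e + g₀)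
  have hcanc : -(n • e) + (n • e + g₀) = g₀ := by abel
  rw [hcanc] at hmain
  have hzero : ∀ k ∈ Finset.range n, a k • Φ v (-(k • e) + (n • e + g₀)) = 0 := by
    intro k hk
    have hk' : (k : ℤ) < n := by exact_mod_cast Finset.mem_range.mp hk
    have hfgt : f g₀ < f (-(k • e) + (n • e + g₀)) := by
      rw [hf_add, hf_add, hf_neg, hf_smul, hf_smul]
      nlinarith
    have : (-(k • e) + (n • e + g₀)) ∉ w.support := fun hmem =>
      absurd (hmax _ hmem) (not_le.mpr hfgt)
    rw [Finsupp.notMem_support_iff.mp this, smul_zero]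
  rw [Finset.sum_eq_zero hzero, add_zero] at hmain
  exact absurd hmain (Finsupp.mem_support_iff.mp hg₀)
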